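/- Let (X,ρ) be a compact metric space, f : X → X continuous, and k, h ∈ ℕ. Then for every ε > 0 there exist 0 < γ < δ < ε such that for every x ∈ X and m ∈ ℕ: ĉ^{f^k}_m(x,γ) ≤ ĉ^{f^k}_m(f^h(x),δ) ≤ ĉ^{f^k}_m(x,ε) and č^{f^k}_m(x,γ) ≤ č^{f^k}_m(f^h(x),δ) ≤ č^{f^k}_m(x,ε). -/

import Mathlib

open Filter Topology Set MeasureTheory

section Defs

variable {X : Type*} [MetricSpace X]

/-- Bowen's metric `ρ^f_m(y,z) = max_{0 ≤ i < m} ρ(f^i y, f^i z)`. -/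
noncomputable def bowenDist (f : X → X) (m : ℕ) (y z : X) : ℝ :=
  (((Finset.range m).sup fun i => nndist (f^[i] y) (f^[i] z)) : NNReal)

open scoped Classical in
/-- The correlation sum `C^f_m(x,n,ε)`. -/
noncomputable def corrSum (f : X → X) (m : ℕ) (x : X) (n : ℕ) (ε : ℝ) : ℝ :=
  (((Finset.range n ×ˢ Finset.range n).filter fun q =>
      bowenDist f m (f^[q.1] x) (f^[q.2] x) ≤ ε).card : ℝ) / (n : ℝ) ^ 2

/-- `ĉ^f_m(x,ε) = limsup_{n→∞} C^f_m(x,n,ε)`. -/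
noncomputable def corrUpper (f : X → X) (m : ℕ) (x : X) (ε : ℝ) : ℝ :=
  Filter.limsup (fun n : ℕ => corrSum f m x n ε) Filter.atTop

/-- `č^f_m(x,ε) = liminf_{n→∞} C^f_m(x,n,ε)`. -/
noncomputable def corrLower (f : X → X) (m : ℕ) (x : X) (ε : ℝ) : ℝ :=
  Filter.liminf (fun n : ℕ => corrSum f m x n ε) Filter.atTop

/-- The upper local correlation entropy `entr⁺(f,x) = lim_{ε→0⁺} limsup_m (−1/m) log č^f_m(x,ε)`;
the limit as `ε → 0⁺` exists by monotonicity in `ε`, and is expressed here as a `limsup`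
along `𝓝[>] 0` (with values in `EReal`). -/
noncomputable def entrUpper (f : X → X) (x : X) : EReal :=
  Filter.limsup (fun ε : ℝ =>
      Filter.limsup (fun m : ℕ => ((-(1 / (m : ℝ)) * Real.log (corrLower f m x ε) : ℝ) : EReal))
        Filter.atTop)
    (𝓝[>] (0 : ℝ))

/-- The lower local correlation entropy `entr⁻(f,x) = lim_{ε→0⁺} liminf_m (−1/m) log ĉ^f_m(x,ε)`. -/
noncomputable def entrLower (f : X → X) (x : X) : EReal :=
  Filter.limsup (fun ε : ℝ =>
      Filter.liminf (fun m : ℕ => ((-(1 / (m : ℝ)) * Real.log (corrUpper f m x ε) : ℝ) : EReal))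
        Filter.atTop)
    (𝓝[>] (0 : ℝ))

/-- `r_m(ε,K)`: the smallest cardinality of a subset of `K` which `(m,ε)`-spans `K`. -/
noncomputable def spanNumOn (f : X → X) (K : Set X) (m : ℕ) (ε : ℝ) : ℕ :=
  sInf {k : ℕ | ∃ A : Finset X, ↑A ⊆ K ∧ A.card = k ∧ ∀ y ∈ K, ∃ a ∈ A, bowenDist f m y a ≤ ε}

/-- Bowen's topological entropy of `f` on `K` (for `K = univ`, of `f` itself;
for closed invariant `K`, of the restriction of `f` to `K`). -/
noncomputable def topEntropyOn (f : X → X) (K : Set X) : EReal :=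
  Filter.limsup (fun ε : ℝ =>
      Filter.limsup (fun n : ℕ => (((1 / (n : ℝ)) * Real.log (spanNumOn f K n ε) : ℝ) : EReal))
        Filter.atTop)
    (𝓝[>] (0 : ℝ))

end Defs


section AuxSandwich

open Filter

variable {X : Type*} [MetricSpace X]

lemma bowenDist_le_iff' {f : X → X} {m : ℕ} {y z : X} {c : ℝ} (hc : 0 ≤ c) :
    bowenDist f m y z ≤ c ↔ ∀ i < m, dist (f^[i] y) (f^[i] z) ≤ c := by
  unfold bowenDist
  rw [← Real.le_toNNReal_iff_coe_le hc, Finset.sup_le_iff]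
  constructor
  · intro H i hi
    have := H i (Finset.mem_range.mpr hi)
    rw [Real.le_toNNReal_iff_coe_le hc] at this
    rw [dist_nndist]
    exact this
  · intro H i hi
    rw [Real.le_toNNReal_iff_coe_le hc]
    have := H i (Finset.mem_range.mp hi)
    rw [dist_nndist] at this
    exact this

lemma corrSum_nonneg' (f : X → X) (m : ℕ) (x : X) (n : ℕ) (ε : ℝ) :
    0 ≤ corrSum f m x n ε := by
  unfold corrSum; positivity

lemma corrSum_le_one' (f : X → X) (m : ℕ) (x : X) (n : ℕ) (ε : ℝ) :
    corrSum f m x n ε ≤ 1 := by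
  classical
  unfold corrSum
  rcases Nat.eq_zero_or_pos n with rfl | hn
  · simp
  · rw [div_le_one (by positivity)]
    calc ((((Finset.range n ×ˢ Finset.range n).filter fun q =>
          bowenDist f m (f^[q.1] x) (f^[q.2] x) ≤ ε).card : ℝ))
        ≤ ((Finset.range n ×ˢ Finset.range n).card : ℝ) := by
          exact_mod_cast Finset.card_le_card (Finset.filter_subset _ _)
      _ = (n : ℝ) ^ 2 := by simp [Finset.card_product]; ring

lemma corrSum_le_corrSum' {g : X → X} {m : ℕ} {x y : X} {a b : ℝ}
    (H : ∀ i j, bowenDist g m (g^[i] x) (g^[j] x) ≤ a → bowenDist g m (g^[i] y) (g^[j] y) ≤ b)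
    (n : ℕ) : corrSum g m x n a ≤ corrSum g m y n b := by
  classical
  unfold corrSum
  rcases Nat.eq_zero_or_pos n with rfl | hn
  · simp
  have hpos : (0 : ℝ) < (n : ℝ) ^ 2 := by positivity
  rw [div_le_div_iff_of_pos_right hpos]
  apply Nat.cast_le.mpr
  apply Finset.card_le_card
  intro q hq
  simp only [Finset.mem_filter] at hq ⊢
  exact ⟨hq.1, H _ _ hq.2⟩

lemma corrSum_shift_le' {g : X → X} {m : ℕ} {x y : X} {a b : ℝ} {s : ℕ}
    (H : ∀ i j, bowenDist g m (g^[i] y) (g^[j] y) ≤ a →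
      bowenDist g m (g^[i + s] x) (g^[j + s] x) ≤ b)
    (n : ℕ) :
    corrSum g m y n a ≤ corrSum g m x (n + s) b * (((n : ℝ) + s) / n) ^ 2 := by
  classical
  rcases Nat.eq_zero_or_pos n with rfl | hn
  · have h0 : corrSum g m y 0 a = 0 := by simp [corrSum]
    rw [h0]
    have := corrSum_nonneg' g m x (0 + s) b
    positivity
  have hcard : (((Finset.range n ×ˢ Finset.range n).filter fun q =>
        bowenDist g m (g^[q.1] y) (g^[q.2] y) ≤ a).card : ℝ) ≤
      (((Finset.range (n + s) ×ˢ Finset.range (n + s)).filter fun q =>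
        bowenDist g m (g^[q.1] x) (g^[q.2] x) ≤ b).card : ℝ) := by
    apply Nat.cast_le.mpr
    apply Finset.card_le_card_of_injOn (fun q => (q.1 + s, q.2 + s))
    · intro q hq
      simp only [Finset.mem_coe, Finset.mem_filter, Finset.mem_product, Finset.mem_range] at hq ⊢
      exact ⟨⟨by omega, by omega⟩, H _ _ hq.2⟩
    · intro q1 _ q2 _ hq
      simp only [Prod.ext_iff] at hq ⊢
      omega
  have hn' : (0 : ℝ) < (n : ℝ) := by exact_mod_cast hn
  have hns : (0 : ℝ) < ((n : ℝ) + s) := by positivity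
  have key : corrSum g m x (n + s) b * (((n : ℝ) + s) / n) ^ 2 =
      (((Finset.range (n + s) ×ˢ Finset.range (n + s)).filter fun q =>
        bowenDist g m (g^[q.1] x) (g^[q.2] x) ≤ b).card : ℝ) / (n : ℝ) ^ 2 := by
    unfold corrSum
    have hcast : (((n + s : ℕ) : ℝ)) = (n : ℝ) + s := by push_cast; ring
    rw [hcast]
    field_simp
    try ring
  rw [key]
  unfold corrSum
  gcongr

lemma limsup_mono01 {a b : ℕ → ℝ} (h : ∀ n, a n ≤ b n) (ha : ∀ n, 0 ≤ a n)
    (hb : ∀ n, b n ≤ 1) : limsup a atTop ≤ limsup b atTop :=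
  limsup_le_limsup (Eventually.of_forall h)
    (isCoboundedUnder_le_of_le _ ha) (isBoundedUnder_of ⟨1, hb⟩)

lemma liminf_mono01 {a b : ℕ → ℝ} (h : ∀ n, a n ≤ b n) (ha : ∀ n, 0 ≤ a n)
    (hb : ∀ n, b n ≤ 1) : liminf a atTop ≤ liminf b atTop :=
  liminf_le_liminf (Eventually.of_forall h)
    (isBoundedUnder_of ⟨0, ha⟩) (isCoboundedUnder_ge_of_le _ hb)

lemma factor_tendsto (s : ℕ) :
    Filter.Tendsto (fun n : ℕ => (((n : ℝ) + s) / n) ^ 2) atTop (𝓝 1) := by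
  have h1 : Filter.Tendsto (fun n : ℕ => ((n : ℝ) + s) / n) atTop (𝓝 1) := by
    have heq : ∀ᶠ n : ℕ in atTop, ((n : ℝ) + s) / n = 1 + (s : ℝ) * (1 / n) := by
      filter_upwards [eventually_gt_atTop 0] with n hn
      have hne : (n : ℝ) ≠ 0 := Nat.cast_ne_zero.mpr hn.ne'
      field_simp
    rw [tendsto_congr' heq]
    have h2 : Filter.Tendsto (fun n : ℕ => 1 + (s : ℝ) * (1 / n)) atTop (𝓝 (1 + (s : ℝ) * 0)) :=
      tendsto_const_nhds.add (tendsto_const_nhds.mul tendsto_one_div_atTop_nhds_zero_nat)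
    simpa using h2
  have := h1.pow 2
  simpa using this

lemma limsup_le_limsup_shift {a b : ℕ → ℝ} (s : ℕ) (ha0 : ∀ n, 0 ≤ a n)
    (hb0 : ∀ n, 0 ≤ b n) (hb1 : ∀ n, b n ≤ 1)
    (hab : ∀ n, a n ≤ b (n + s) * (((n : ℝ) + s) / n) ^ 2) :
    limsup a atTop ≤ limsup b atTop := by
  apply le_of_forall_pos_le_add
  intro η hη
  have hev : ∀ᶠ n : ℕ in atTop, a n ≤ b (n + s) + η := by
    filter_upwards [(factor_tendsto s).eventually_lt_const (by linarith : (1:ℝ) < 1 + η)]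
      with n hn
    calc a n ≤ b (n + s) * (((n : ℝ) + s) / n) ^ 2 := hab n
      _ ≤ b (n + s) * (1 + η) := by
          apply mul_le_mul_of_nonneg_left hn.le (hb0 _)
      _ = b (n + s) + b (n + s) * η := by ring
      _ ≤ b (n + s) + η := by nlinarith [hb1 (n + s), hb0 (n + s)]
  have h1 : limsup a atTop ≤ limsup (fun n => b (n + s) + η) atTop :=
    limsup_le_limsup hev (isCoboundedUnder_le_of_le _ ha0)
      (isBoundedUnder_of ⟨1 + η, fun n => by linarith [hb1 (n + s)]⟩)
  rwa [limsup_add_const atTop (fun n => b (n + s)) η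
      (isBoundedUnder_of ⟨1, fun n => hb1 _⟩) (isCoboundedUnder_le_of_le _ fun n => hb0 _),
    limsup_nat_add] at h1

lemma liminf_le_liminf_shift {a b : ℕ → ℝ} (s : ℕ) (ha0 : ∀ n, 0 ≤ a n)
    (hb0 : ∀ n, 0 ≤ b n) (hb1 : ∀ n, b n ≤ 1)
    (hab : ∀ n, a n ≤ b (n + s) * (((n : ℝ) + s) / n) ^ 2) :
    liminf a atTop ≤ liminf b atTop := by
  apply le_of_forall_pos_le_add
  intro η hη
  have hev : ∀ᶠ n : ℕ in atTop, a n ≤ b (n + s) + η := by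
    filter_upwards [(factor_tendsto s).eventually_lt_const (by linarith : (1:ℝ) < 1 + η)]
      with n hn
    calc a n ≤ b (n + s) * (((n : ℝ) + s) / n) ^ 2 := hab n
      _ ≤ b (n + s) * (1 + η) := by
          apply mul_le_mul_of_nonneg_left hn.le (hb0 _)
      _ = b (n + s) + b (n + s) * η := by ring
      _ ≤ b (n + s) + η := by nlinarith [hb1 (n + s), hb0 (n + s)]
  have h1 : liminf a atTop ≤ liminf (fun n => b (n + s) + η) atTop :=
    liminf_le_liminf hev (isBoundedUnder_of ⟨0, ha0⟩)
      (isCoboundedUnder_ge_of_le _ (x := 1 + η)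
        (fun n => by linarith [hb1 (n + s)]))
  rwa [liminf_add_const atTop (fun n => b (n + s)) η
      (isCoboundedUnder_ge_of_le _ fun n => hb1 _) (isBoundedUnder_of ⟨0, fun n => hb0 _⟩),
    liminf_nat_add] at h1

lemma iterate_step1 {f : X → X} {γ δ : ℝ} (hγ0 : 0 ≤ γ) (hδ0 : 0 ≤ δ) (k h m : ℕ)
    (H : ∀ u v : X, dist u v ≤ γ → dist (f^[h] u) (f^[h] v) ≤ δ)
    (x : X) (i j : ℕ)
    (hb : bowenDist (f^[k]) m ((f^[k])^[i] x) ((f^[k])^[j] x) ≤ γ) :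
    bowenDist (f^[k]) m ((f^[k])^[i] (f^[h] x)) ((f^[k])^[j] (f^[h] x)) ≤ δ := by
  rw [bowenDist_le_iff' hδ0]
  rw [bowenDist_le_iff' hγ0] at hb
  intro l hl
  have e : ∀ (i : ℕ) (y : X),
      (f^[k])^[l] ((f^[k])^[i] (f^[h] y)) = f^[h] ((f^[k])^[l] ((f^[k])^[i] y)) := by
    intro i y
    simp only [← Function.iterate_mul, ← Function.iterate_add_apply]
    congr 1
    generalize k * l = A
    generalize k * i = B
    omega
  rw [e i x, e j x]
  exact H _ _ (hb l hl)

lemma iterate_step2 {f : X → X} {δ ε : ℝ} (hδ0 : 0 ≤ δ) (hε0 : 0 ≤ ε)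
    (k h q r m : ℕ) (hrk : r < k) (hqr : h = k * q + r)
    (H : ∀ u v : X, dist u v ≤ δ → dist (f^[k - r] u) (f^[k - r] v) ≤ ε)
    (x : X) (i j : ℕ)
    (hb : bowenDist (f^[k]) m ((f^[k])^[i] (f^[h] x)) ((f^[k])^[j] (f^[h] x)) ≤ δ) :
    bowenDist (f^[k]) m ((f^[k])^[i + (q + 1)] x) ((f^[k])^[j + (q + 1)] x) ≤ ε := by
  rw [bowenDist_le_iff' hε0]
  rw [bowenDist_le_iff' hδ0] at hb
  intro l hl
  have e : ∀ (i : ℕ) (y : X),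
      (f^[k])^[l] ((f^[k])^[i + (q + 1)] y) =
        f^[k - r] ((f^[k])^[l] ((f^[k])^[i] (f^[h] y))) := by
    intro i y
    simp only [← Function.iterate_mul, ← Function.iterate_add_apply]
    congr 1
    subst hqr
    rw [Nat.mul_add k i (q + 1), Nat.mul_add k q 1, Nat.mul_one]
    generalize k * l = A
    generalize k * i = B
    generalize k * q = C
    omega
  rw [e i x, e j x]
  exact H _ _ (hb l hl)

end AuxSandwich

/-- For every `ε > 0` there are `0 < γ < δ < ε` such that for every `x ∈ X` and `m ∈ ℕ`:
`ĉ^{f^k}_m(x,γ) ≤ ĉ^{f^k}_m(f^h(x),δ) ≤ ĉ^{f^k}_m(x,ε)` and likewise for `č`. -/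
theorem corr_iterate_sandwich {X : Type*} [MetricSpace X] [CompactSpace X]
    (f : X → X) (hf : Continuous f) (k h : ℕ) (hk : 0 < k) (hh : 0 < h)
    (ε : ℝ) (hε : 0 < ε) :
    ∃ γ δ : ℝ, 0 < γ ∧ γ < δ ∧ δ < ε ∧
      ∀ (x : X) (m : ℕ), 0 < m →
        (corrUpper (f^[k]) m x γ ≤ corrUpper (f^[k]) m (f^[h] x) δ ∧
          corrUpper (f^[k]) m (f^[h] x) δ ≤ corrUpper (f^[k]) m x ε) ∧
        (corrLower (f^[k]) m x γ ≤ corrLower (f^[k]) m (f^[h] x) δ ∧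
          corrLower (f^[k]) m (f^[h] x) δ ≤ corrLower (f^[k]) m x ε) := by
  obtain ⟨q, r, hrk, hqr⟩ : ∃ q r, r < k ∧ h = k * q + r :=
    ⟨h / k, h % k, Nat.mod_lt _ hk, (Nat.div_add_mod h k).symm⟩
  -- choose δ via uniform continuity of f^[k - r]
  have hukr : UniformContinuous (f^[k - r]) :=
    CompactSpace.uniformContinuous_of_continuous (hf.iterate _)
  obtain ⟨δ₁, hδ₁0, hδ₁⟩ := Metric.uniformContinuous_iff.mp hukr ε hε
  set δ : ℝ := min (δ₁ / 2) (ε / 2) with hδdef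
  have hδ0 : 0 < δ := lt_min (by linarith) (by linarith)
  have hδε : δ < ε := lt_of_le_of_lt (min_le_right _ _) (by linarith)
  have hδprop : ∀ u v : X, dist u v ≤ δ → dist (f^[k - r] u) (f^[k - r] v) ≤ ε := by
    intro u v huv
    exact le_of_lt (hδ₁ (lt_of_le_of_lt huv
      (lt_of_le_of_lt (min_le_left _ _) (by linarith))))
  -- choose γ via uniform continuity of f^[h]
  have huh : UniformContinuous (f^[h]) :=
    CompactSpace.uniformContinuous_of_continuous (hf.iterate _)
  obtain ⟨γ₁, hγ₁0, hγ₁⟩ := Metric.uniformContinuous_iff.mp huh δ hδ0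
  set γ : ℝ := min (γ₁ / 2) (δ / 2) with hγdef
  have hγ0 : 0 < γ := lt_min (by linarith) (by linarith)
  have hγδ : γ < δ := lt_of_le_of_lt (min_le_right _ _) (by linarith)
  have hγprop : ∀ u v : X, dist u v ≤ γ → dist (f^[h] u) (f^[h] v) ≤ δ := by
    intro u v huv
    exact le_of_lt (hγ₁ (lt_of_le_of_lt huv
      (lt_of_le_of_lt (min_le_left _ _) (by linarith))))
  refine ⟨γ, δ, hγ0, hγδ, hδε, ?_⟩
  intro x m _
  have himp1 : ∀ i j, bowenDist (f^[k]) m ((f^[k])^[i] x) ((f^[k])^[j] x) ≤ γ →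
      bowenDist (f^[k]) m ((f^[k])^[i] (f^[h] x)) ((f^[k])^[j] (f^[h] x)) ≤ δ :=
    fun i j hb => iterate_step1 hγ0.le hδ0.le k h m hγprop x i j hb
  have himp2 : ∀ i j, bowenDist (f^[k]) m ((f^[k])^[i] (f^[h] x)) ((f^[k])^[j] (f^[h] x)) ≤ δ →
      bowenDist (f^[k]) m ((f^[k])^[i + (q + 1)] x) ((f^[k])^[j + (q + 1)] x) ≤ ε :=
    fun i j hb => iterate_step2 hδ0.le hε.le k h q r m hrk hqr hδprop x i j hb
  have hstep1 : ∀ n, corrSum (f^[k]) m x n γ ≤ corrSum (f^[k]) m (f^[h] x) n δ :=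
    corrSum_le_corrSum' himp1
  have hstep2 : ∀ n, corrSum (f^[k]) m (f^[h] x) n δ ≤
      corrSum (f^[k]) m x (n + (q + 1)) ε * (((n : ℝ) + ((q + 1 : ℕ) : ℝ)) / n) ^ 2 :=
    fun n => corrSum_shift_le' (s := q + 1) himp2 n
  constructor
  · constructor
    · exact limsup_mono01 hstep1 (fun n => corrSum_nonneg' _ _ _ _ _)
        (fun n => corrSum_le_one' _ _ _ _ _)
    · exact limsup_le_limsup_shift (q + 1) (fun n => corrSum_nonneg' _ _ _ _ _)
        (fun n => corrSum_nonneg' _ _ _ _ _) (fun n => corrSum_le_one' _ _ _ _ _) hstep2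
  · constructor
    · exact liminf_mono01 hstep1 (fun n => corrSum_nonneg' _ _ _ _ _)
        (fun n => corrSum_le_one' _ _ _ _ _)
    · exact liminf_le_liminf_shift (q + 1) (fun n => corrSum_nonneg' _ _ _ _ _)
        (fun n => corrSum_nonneg' _ _ _ _ _) (fun n => corrSum_le_one' _ _ _ _ _) hstep2
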